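/- arXiv:2403.14508 — 2 statements merged into one kernel-verified Lean document; each statement's English description precedes it below -/
import Mathlib

section
/- The linear smoothed log barrier function ψ̃_μ is convex on ℝ. -/
/-- The linear smoothed log barrier function. -/
noncomputable def psi (μ x : ℝ) : ℝ :=
  if x ≤ -1 / μ ^ 2 then -(1 / μ) * Real.log (-x)
  else μ * x - (1 / μ) * Real.log (1 / μ ^ 2) + 1 / μ

theorem psi_convexOn (μ : ℝ) (hμ : 0 < μ) : ConvexOn ℝ Set.univ (psi μ) := by
  have hμ2 : (0:ℝ) < μ ^ 2 := by positivity
  set a : ℝ := -1 / μ ^ 2 with ha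
  have ha0 : a < 0 := by rw [ha]; exact div_neg_of_neg_of_pos (by norm_num) hμ2
  set f : ℝ → ℝ := fun x => -(1 / μ) * Real.log (-x) with hf
  set g : ℝ → ℝ := fun x => μ * x - (1 / μ) * Real.log (1 / μ ^ 2) + 1 / μ with hg
  have hna : -a = 1 / μ ^ 2 := by rw [ha]; ring
  have hμa : μ * a = -(1/μ) := by rw [ha]; field_simp
  have hfg : f a = g a := by
    rw [hf, hg]; simp only
    rw [hna, hμa]; ring
  have heqf : ∀ x ≤ a, psi μ x = f x := fun x hx => if_pos hx
  have heqg : ∀ x ∈ Set.Ici a, psi μ x = g x := by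
    intro x hx
    rcases eq_or_lt_of_le (Set.mem_Ici.mp hx) with h | h
    · rw [← h, heqf a le_rfl]; exact hfg
    · exact if_neg (not_le.mpr h)
  set φ : ℝ → ℝ := fun x => if x ≤ a then -1/(μ*x) else μ with hφ
  have hgd : ∀ x : ℝ, HasDerivAt g μ x := by
    intro x
    have h1 : HasDerivAt (fun y : ℝ => μ * y) μ x := by
      simpa using (hasDerivAt_id x).const_mul μ
    exact (h1.sub_const ((1 / μ) * Real.log (1 / μ ^ 2))).add_const (1/μ)
  have hfd : ∀ x < (0:ℝ), HasDerivAt f (-1/(μ*x)) x := by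
    intro x hx
    have h1 : HasDerivAt (fun y : ℝ => Real.log (-y)) ((-x)⁻¹ * (-1)) x :=
      (Real.hasDerivAt_log (by linarith)).comp x (hasDerivAt_neg x)
    have h2 := h1.const_mul (-(1/μ))
    exact h2.congr_deriv (by field_simp)
  have hda : -1/(μ*a) = μ := by rw [ha]; field_simp
  have hkey : ∀ x, HasDerivAt (psi μ) (φ x) x := by
    intro x
    rcases lt_trichotomy x a with h | h | h
    · have hφx : φ x = -1/(μ*x) := if_pos h.le
      rw [hφx]
      refine (hfd x (h.trans ha0)).congr_of_eventuallyEq ?_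
      filter_upwards [Iio_mem_nhds h] with y hy
      exact heqf y (le_of_lt hy)
    · have hφx : φ x = μ := by rw [hφ]; simp only [h, if_pos le_rfl]; exact hda
      rw [hφx, h]
      have h1 : HasDerivWithinAt (psi μ) μ (Set.Iic a) a := by
        have h1' := (hfd a ha0).hasDerivWithinAt (s := Set.Iic a)
        rw [hda] at h1'
        exact h1'.congr (fun y hy => heqf y hy) (heqf a le_rfl)
      have h2 : HasDerivWithinAt (psi μ) μ (Set.Ici a) a :=
        ((hgd a).hasDerivWithinAt).congr (fun y hy => heqg y hy) (heqg a Set.self_mem_Ici)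
      have h3 := h1.union h2
      rw [Set.Iic_union_Ici] at h3
      exact hasDerivWithinAt_univ.mp h3
    · have hφx : φ x = μ := if_neg (not_le.mpr h)
      rw [hφx]
      refine (hgd x).congr_of_eventuallyEq ?_
      filter_upwards [Ioi_mem_nhds h] with y hy
      exact heqg y (Set.mem_Ici.mpr (le_of_lt hy))
  have hmono : MonotoneOn (deriv (psi μ)) (interior Set.univ) := by
    have hd : deriv (psi μ) = φ := funext fun x => (hkey x).deriv
    rw [hd]
    intro x _ y _ hxy
    rw [hφ]; simp only
    by_cases hy : y ≤ a
    · rw [if_pos (hxy.trans hy), if_pos hy]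
      have hx0 : x < 0 := lt_of_le_of_lt (hxy.trans hy) ha0
      have hy0 : y < 0 := lt_of_le_of_lt hy ha0
      have hmx : (0:ℝ) < -(μ*y) := by nlinarith
      have hle : -(μ*y) ≤ -(μ*x) := by nlinarith
      have := one_div_le_one_div_of_le hmx hle
      calc -1/(μ*x) = 1/(-(μ*x)) := by rw [div_neg, neg_div]
        _ ≤ 1/(-(μ*y)) := this
        _ = -1/(μ*y) := by rw [div_neg, neg_div]
    · rw [if_neg hy]
      by_cases hx : x ≤ a
      · rw [if_pos hx]
        have hle : 1/μ ≤ -(μ*x) := by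
          have : μ * x ≤ μ * a := by nlinarith
          rw [hμa] at this; linarith
        have := one_div_le_one_div_of_le (by positivity) hle
        calc -1/(μ*x) = 1/(-(μ*x)) := by rw [div_neg, neg_div]
          _ ≤ 1/(1/μ) := this
          _ = μ := one_div_one_div μ
      · rw [if_neg hx]
  have hdiff : DifferentiableOn ℝ (psi μ) (interior Set.univ) :=
    fun x _ => ((hkey x).differentiableAt).differentiableWithinAt
  have hcont : ContinuousOn (psi μ) Set.univ :=
    fun x _ => ((hkey x).differentiableAt).continuousAt.continuousWithinAt
  exact MonotoneOn.convexOn_of_deriv convex_univ hcont hdiff hmono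
end

section
/- For all x ≤ 0 and μ ≥ 1, the linear smoothed log barrier function satisfies the uniform bound ψ̃_μ(x) ≤ (2·log(μ) + 1)/μ, with equality at x = 0. -/
theorem psi_uniform_bound_nonpos (μ : ℝ) (hμ : 1 ≤ μ) :
    (∀ x ≤ (0 : ℝ), psi μ x ≤ (2 * Real.log μ + 1) / μ) ∧
      psi μ 0 = (2 * Real.log μ + 1) / μ := by
  have hμ0 : (0:ℝ) < μ := lt_of_lt_of_le one_pos hμ
  have hμ2 : (0:ℝ) < μ ^ 2 := by positivity
  have hlog : Real.log (1 / μ ^ 2) = -(2 * Real.log μ) := by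
    rw [Real.log_div one_ne_zero (ne_of_gt hμ2), Real.log_one, Real.log_pow]
    push_cast; ring
  have hneg : -1 / μ ^ 2 = -(1 / μ ^ 2) := by ring
  have hzero : psi μ 0 = (2 * Real.log μ + 1) / μ := by
    have hne : ¬ (0:ℝ) ≤ -1 / μ ^ 2 := by
      rw [hneg]; simp only [not_le]
      have : (0:ℝ) < 1 / μ ^ 2 := by positivity
      linarith
    rw [psi, if_neg hne, hlog]
    field_simp
    ring
  refine ⟨fun x hx => ?_, hzero⟩
  rw [psi]
  split_ifs with h
  · rw [hneg] at h
    have hpos : (0:ℝ) < 1 / μ ^ 2 := by positivity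
    have hxb : 1 / μ ^ 2 ≤ -x := by linarith
    have hlb : Real.log (1 / μ ^ 2) ≤ Real.log (-x) :=
      Real.log_le_log (by positivity) hxb
    rw [hlog] at hlb
    have h1 : -(1 / μ) * Real.log (-x) ≤ (1/μ) * (2 * Real.log μ) := by
      have hinv : (0:ℝ) < 1/μ := by positivity
      nlinarith
    have h2 : (1/μ) * (2 * Real.log μ) ≤ (2 * Real.log μ + 1) / μ := by
      have e : (1/μ) * (2 * Real.log μ) = (2 * Real.log μ) / μ := by ring
      rw [e]
      gcongr
      linarith
    linarith
  · rw [hlog]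
    have : μ * x ≤ 0 := mul_nonpos_of_nonneg_of_nonpos (le_of_lt hμ0) hx
    have heq : -(1 / μ) * (-(2 * Real.log μ)) + 1 / μ = (2 * Real.log μ + 1) / μ := by
      field_simp
    linarith [heq]
end
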